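/- Let u be a profile of n voters' strict preference orders on a set A of p candidates (p ≥ 2), let s be a scoring (s_0 ≤ s_1 ≤ … ≤ s_{p-1}, s_0 < s_{p-1}), and suppose a candidate a ∈ A belongs to the de Borda winner set β_s(u). Then the score vector r(a) belongs to the weak Pareto boundary of the convex hull of R = {r(x) : x ∈ A} ⊆ ℝ^{p-1}. -/

import Mathlib

/-- The de Borda estimate of candidate `a` under scores `s` for profile `u`,
where `u i a : Fin p` is the 0-indexed rank of candidate `a` in the preference
of voter `i` (`0` = top place).  A candidate with 0-indexed rank `r` obtains
`s (p-1-r)` points, i.e. `B_s(a) = ∑_i s_{p - rank_i(a)}` with 1-indexed ranks. -/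
def bordaEstimate {n p : ℕ} (u : Fin n → Equiv.Perm (Fin p)) (s : Fin p → ℝ)
    (a : Fin p) : ℝ :=
  ∑ i : Fin n, s (Fin.rev (u i a))

/-- The score vector of candidate `a` : its `k`-th component (`k : Fin (p-1)`,
0-indexed) is the number of voters who place `a` within the top `k+1` places. -/
def scoreVec {n p : ℕ} (u : Fin n → Equiv.Perm (Fin p)) (a : Fin p) :
    Fin (p - 1) → ℝ :=
  fun k => ((Finset.univ : Finset (Fin n)).filter fun i => ((u i a : Fin p) : ℕ) ≤ (k : ℕ)).card

/-- `f'` belongs to the Pareto boundary of `F`. -/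
def ParetoOpt {m : ℕ} (F : Set (Fin m → ℝ)) (f' : Fin m → ℝ) : Prop :=
  f' ∈ F ∧ ¬ ∃ f ∈ F, (∀ j, f' j ≤ f j) ∧ ∃ j0, f' j0 < f j0

/-- `f''` belongs to the weak Pareto boundary of `F`. -/
def WeakParetoOpt {m : ℕ} (F : Set (Fin m → ℝ)) (f'' : Fin m → ℝ) : Prop :=
  f'' ∈ F ∧ ¬ ∃ f ∈ F, ∀ j, f'' j < f j

/-- If `a` is a de Borda winner for a scoring `s` (i.e. `s_0 ≤ ... ≤ s_{p-1}`
with `s_0 < s_{p-1}`), then its score vector lies on the weak Pareto boundary of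
the convex hull of the set of all score vectors. -/
theorem winner_mem_weakParetoBoundary_convexHull {n p : ℕ} (hn : 1 ≤ n) (hp : 2 ≤ p)
    (u : Fin n → Equiv.Perm (Fin p)) (s : Fin p → ℝ) (hmono : Monotone s)
    (hs : s ⟨0, by omega⟩ < s ⟨p - 1, by omega⟩)
    (a : Fin p) (ha : ∀ b : Fin p, bordaEstimate u s b ≤ bordaEstimate u s a) :
    WeakParetoOpt (convexHull ℝ (Set.range (scoreVec u))) (scoreVec u a) := by
  classical
  set S : ℕ → ℝ := fun j => s ⟨min j (p-1), by omega⟩ with hS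
  have hSmono : Monotone S := by
    intro i j hij
    apply hmono
    simp only [Fin.mk_le_mk]
    omega
  set g : ℕ → ℝ := fun k => S (p-1-k) with hg
  set dN : ℕ → ℝ := fun k => g k - g (k+1) with hdN
  have hdnonneg : ∀ k, 0 ≤ dN k := by
    intro k
    simp only [hdN, hg]
    exact sub_nonneg.2 (hSmono (by omega))
  -- per-voter identity
  have voter : ∀ r : Fin p, s (Fin.rev r)
      = S 0 + ∑ k : Fin (p-1), if (r:ℕ) ≤ (k:ℕ) then dN k else 0 := by
    intro r
    rw [Fin.sum_univ_eq_sum_range (fun k => if (r:ℕ) ≤ k then dN k else 0) (p-1)]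
    have hfil : (Finset.range (p-1)).filter (fun k => (r:ℕ) ≤ k) = Finset.Ico (r:ℕ) (p-1) := by
      ext k; simp only [Finset.mem_filter, Finset.mem_range, Finset.mem_Ico]; omega
    rw [← Finset.sum_filter, hfil,
      Finset.sum_Ico_eq_sub _ (by omega : (r:ℕ) ≤ p-1),
      Finset.sum_range_sub' g, Finset.sum_range_sub' g]
    have hgp : g (p-1) = S 0 := by simp only [hg]; congr 1; omega
    have hrev : s (Fin.rev r) = g (r:ℕ) := by
      simp only [hg, hS]
      congr 1
      apply Fin.ext
      simp only [Fin.val_rev]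
      omega
    rw [hrev, hgp]
    ring
  -- key affine identity per candidate
  have key : ∀ x : Fin p, bordaEstimate u s x
      = n * S 0 + ∑ k : Fin (p-1), dN (k:ℕ) * scoreVec u x k := by
    intro x
    unfold bordaEstimate
    calc ∑ i : Fin n, s (Fin.rev (u i x))
        = ∑ i : Fin n, (S 0 + ∑ k : Fin (p-1), if ((u i x : Fin p):ℕ) ≤ (k:ℕ) then dN (k:ℕ) else 0) :=
          Finset.sum_congr rfl fun i _ => voter (u i x)
      _ = n * S 0 + ∑ k : Fin (p-1), ∑ i : Fin n, (if ((u i x : Fin p):ℕ) ≤ (k:ℕ) then dN (k:ℕ) else 0) := by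
          rw [Finset.sum_add_distrib, Finset.sum_const, Finset.sum_comm]
          simp [nsmul_eq_mul]
      _ = n * S 0 + ∑ k : Fin (p-1), dN (k:ℕ) * scoreVec u x k := by
          congr 1
          refine Finset.sum_congr rfl fun k _ => ?_
          rw [← Finset.sum_filter, Finset.sum_const, nsmul_eq_mul]
          unfold scoreVec
          ring
  -- positivity of the sum of coefficients
  have hsumpos : 0 < ∑ k : Fin (p-1), dN (k:ℕ) := by
    rw [Fin.sum_univ_eq_sum_range (fun k => dN k) (p-1), Finset.sum_range_sub' g]
    have h0 : g 0 = s ⟨p-1, by omega⟩ := by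
      simp only [hg, hS, Nat.sub_zero]
      congr 1
      apply Fin.ext
      simp
    have h1 : g (p-1) = s ⟨0, by omega⟩ := by
      simp only [hg, hS, Nat.sub_self]
      congr 1
    rw [h0, h1]
    linarith
  have hex : ∃ k0 : Fin (p-1), 0 < dN (k0:ℕ) := by
    by_contra h
    push_neg at h
    have : ∑ k : Fin (p-1), dN (k:ℕ) ≤ 0 := Finset.sum_nonpos fun k _ => h k
    linarith
  set L : (Fin (p-1) → ℝ) → ℝ := fun f => ∑ k : Fin (p-1), dN (k:ℕ) * f k with hL
  have hlin : IsLinearMap ℝ L := by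
    constructor
    · intro f1 f2
      simp [hL, mul_add, Finset.sum_add_distrib]
    · intro c f
      simp only [hL, Pi.smul_apply, smul_eq_mul, Finset.mul_sum]
      exact Finset.sum_congr rfl fun k _ => by ring
  have hC : convexHull ℝ (Set.range (scoreVec u)) ⊆ {f | L f ≤ L (scoreVec u a)} := by
    apply convexHull_min
    · rintro _ ⟨x, rfl⟩
      have hx := ha x
      rw [key x, key a] at hx
      simp only [Set.mem_setOf_eq, hL]
      linarith
    · exact convex_halfSpace_le hlin _
  constructor
  · exact subset_convexHull ℝ _ ⟨a, rfl⟩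
  · rintro ⟨f, hf, hlt⟩
    have h1 : L f ≤ L (scoreVec u a) := hC hf
    obtain ⟨k0, hk0⟩ := hex
    have h2 : L (scoreVec u a) < L f := by
      simp only [hL]
      apply Finset.sum_lt_sum
      · exact fun k _ => mul_le_mul_of_nonneg_left (le_of_lt (hlt k)) (hdnonneg k)
      · exact ⟨k0, Finset.mem_univ _, mul_lt_mul_of_pos_left (hlt k0) hk0⟩
    linarith
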